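/- Let $X$ be a Banach lattice, $J$ a closed ideal in $X$, and $Q : X \to X/J$ the quotient map. If $(y_k)_{k=1}^{\infty}$ is a disjoint sequence in $X/J$ (i.e., $|y_j| \wedge |y_k| = 0$ for $j \neq k$), then there exists a disjoint sequence $(x_k)_{k=1}^{\infty}$ in $X$ with $Q x_k = y_k$ for every $k$. -/

import Mathlib

section Aux

variable {α : Type*} [NormedAddCommGroup α] [Lattice α] [HasSolidNorm α] [IsOrderedAddMonoid α]

private lemma aux_inf_add_le {a b c : α} (hab : 0 ≤ a ⊓ b) (hc : 0 ≤ c) :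
    a ⊓ (b + c) ≤ a ⊓ b + a ⊓ c := by
  rw [← sub_le_iff_le_add']
  refine le_inf ?_ ?_
  · exact le_trans (sub_le_self _ hab) inf_le_left
  · rw [sub_inf]
    refine sup_le (le_trans (sub_nonpos.mpr inf_le_left) hc) ?_
    exact sub_le_iff_le_add'.mpr inf_le_right

private lemma aux_disjoint_add {a b c : α} (ha : 0 ≤ a) (hb : 0 ≤ b) (hc : 0 ≤ c)
    (h1 : a ⊓ b = 0) (h2 : a ⊓ c = 0) : a ⊓ (b + c) = 0 := by
  refine le_antisymm ?_ (le_inf ha (add_nonneg hb hc))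
  calc a ⊓ (b + c) ≤ a ⊓ b + a ⊓ c := aux_inf_add_le (h1 ▸ le_rfl) hc
  _ = 0 := by rw [h1, h2, add_zero]

private lemma aux_disjoint_sum {ι : Type*} {a : α} (ha : 0 ≤ a) (f : ι → α) (s : Finset ι)
    (hf : ∀ i ∈ s, 0 ≤ f i) (h : ∀ i ∈ s, a ⊓ f i = 0) : a ⊓ ∑ i ∈ s, f i = 0 := by
  classical
  induction s using Finset.induction_on with
  | empty => simpa using inf_eq_right.mpr ha
  | insert x s' hx ih =>
    rw [Finset.sum_insert hx]
    exact aux_disjoint_add ha (hf x (Finset.mem_insert_self x s'))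
      (by exact Finset.sum_nonneg (fun i hi => hf i (Finset.mem_insert_of_mem hi)))
      (h x (Finset.mem_insert_self x s'))
      (ih (fun i hi => hf i (Finset.mem_insert_of_mem hi))
        (fun i hi => h i (Finset.mem_insert_of_mem hi)))

private lemma aux_disjoint_nsmul {a b : α} (ha : 0 ≤ a) (hb : 0 ≤ b)
    (h : a ⊓ b = 0) (n : ℕ) : a ⊓ n • b = 0 := by
  induction n with
  | zero => simpa using inf_eq_right.mpr ha
  | succ n ih =>
    rw [succ_nsmul]
    exact aux_disjoint_add ha (nsmul_nonneg hb n) hb ih h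

private lemma aux_disjoint_nsmul₂ {a b : α} (ha : 0 ≤ a) (hb : 0 ≤ b)
    (h : a ⊓ b = 0) (m n : ℕ) : m • a ⊓ n • b = 0 := by
  have h1 : b ⊓ m • a = 0 := aux_disjoint_nsmul hb ha (by rwa [inf_comm]) m
  have h2 : m • a ⊓ b = 0 := by rwa [inf_comm]
  exact aux_disjoint_nsmul (nsmul_nonneg ha m) hb h2 n

private lemma aux_posPart_sub (a b : α) : (a - b)⁺ = a - a ⊓ b := by
  have h1 : (a - b) ⊔ 0 = (a - b) ⊔ (b - b) := by rw [sub_self]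
  have h2 : a ⊔ b = a + b - a ⊓ b := by
    have := inf_add_sup a b
    rw [← this]; abel
  rw [posPart_def, h1, ← sup_sub, h2]
  abel

private lemma aux_posPart_inf_posPart {a b : α} (h : a + b ≤ 0) : a⁺ ⊓ b⁺ = 0 := by
  have hb : b ≤ -a := by
    have := add_le_add_left h (-a)
    simpa [neg_add_cancel_left] using this
  refine le_antisymm ?_ (le_inf (posPart_nonneg a) (posPart_nonneg b))
  calc a⁺ ⊓ b⁺ ≤ a⁺ ⊓ (-a)⁺ := inf_le_inf_left _ (posPart_mono hb)
  _ = a⁺ ⊓ a⁻ := by rw [posPart_neg]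
  _ = 0 := posPart_inf_negPart_eq_zero a

private lemma aux_nsmul_nonneg_imp {n : ℕ} (hn : n ≠ 0) {x : α} (h : 0 ≤ n • x) : 0 ≤ x := by
  have hx : x⁻ ≤ n • x⁻ := by
    have := nsmul_le_nsmul_left (negPart_nonneg x) (Nat.one_le_iff_ne_zero.mpr hn)
    simpa using this
  have hsplit : n • x = n • x⁺ - n • x⁻ := by
    rw [← nsmul_sub, posPart_sub_negPart]
  have h1 : n • x⁻ ≤ n • x⁺ := by
    rw [hsplit] at h
    exact sub_nonneg.mp h
  have h2 : x⁻ ≤ n • x⁺ := hx.trans h1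
  have h3 : x⁻ ⊓ x⁺ = 0 := by rw [inf_comm]; exact posPart_inf_negPart_eq_zero x
  have h4 : x⁻ ⊓ n • x⁺ = 0 := aux_disjoint_nsmul (negPart_nonneg x) (posPart_nonneg x) h3 n
  have h5 : x⁻ = 0 := le_antisymm (by rw [← h4]; exact le_inf le_rfl h2) (negPart_nonneg x)
  have h6 := posPart_sub_negPart x
  rw [h5, sub_zero] at h6
  exact h6 ▸ posPart_nonneg x

private lemma aux_le_abs_nsmul {n : ℕ} (hn : n ≠ 0) (a : α) : |a| ≤ |n • a| := by
  obtain ⟨t, rfl⟩ := Nat.exists_eq_succ_of_ne_zero hn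
  set c := (t + 1) • a with hc
  have hca : c ≤ |c| := le_abs_self c
  have hnc : -|c| ≤ c := neg_le.mpr (neg_le_abs c)
  have h1 : 0 ≤ (t + 1) • (|c| - a) := by
    have he : (t + 1) • (|c| - a) = t • |c| + (|c| - (t + 1) • a) := by
      rw [nsmul_sub, succ_nsmul]; abel
    rw [he]
    exact add_nonneg (nsmul_nonneg (abs_nonneg c) t) (sub_nonneg.mpr hca)
  have h2 : 0 ≤ (t + 1) • (|c| + a) := by
    have he : (t + 1) • (|c| + a) = t • |c| + (|c| + (t + 1) • a) := by
      rw [nsmul_add, succ_nsmul]; abel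
    have h0 : 0 ≤ |c| + (t + 1) • a := by
      calc (0 : α) = |c| + -|c| := by abel
      _ ≤ |c| + c := add_le_add_right hnc _
    rw [he]
    exact add_nonneg (nsmul_nonneg (abs_nonneg c) t) h0
  have ha1 : a ≤ |c| := sub_nonneg.mp (aux_nsmul_nonneg_imp (Nat.succ_ne_zero t) h1)
  have ha2 : -a ≤ |c| := by
    have := aux_nsmul_nonneg_imp (Nat.succ_ne_zero t) h2
    have h' : 0 ≤ |c| - -a := by rwa [sub_neg_eq_add]
    exact sub_nonneg.mp h'
  exact abs_le'.mpr ⟨ha1, ha2⟩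

private lemma aux_abs_nsmul_le (n : ℕ) (a : α) : |n • a| ≤ n • |a| := by
  induction n with
  | zero => simp
  | succ n ih =>
    rw [succ_nsmul, succ_nsmul]
    exact le_trans (abs_add_le _ _) (add_le_add_left ih _)

end Aux

/-- disjoint sequences in a quotient of a Banach lattice by a closed
ideal lift to disjoint sequences.  The quotient map is formalized as a surjective
lattice homomorphism `Q` with closed kernel realizing the quotient norm
(every `y` lifts with norm at most `‖y‖ + ε`). -/
theorem stmt_16 {X Y : Type*}
    [NormedAddCommGroup X] [Lattice X] [HasSolidNorm X] [IsOrderedAddMonoid X] [NormedSpace ℝ X] [CompleteSpace X]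
    [NormedAddCommGroup Y] [Lattice Y] [HasSolidNorm Y] [IsOrderedAddMonoid Y] [NormedSpace ℝ Y] [CompleteSpace Y]
    (Q : X →ₗ[ℝ] Y) (hQlat : ∀ x y, Q (x ⊔ y) = Q x ⊔ Q y)
    (hQsurj : Function.Surjective Q)
    (hker : IsClosed {x : X | Q x = 0})
    (hQnorm : ∀ (y : Y) (ε : ℝ), 0 < ε → ∃ x, Q x = y ∧ ‖x‖ ≤ ‖y‖ + ε)
    (y : ℕ → Y) (hdisj : ∀ j k, j ≠ k → |y j| ⊓ |y k| = 0) :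
    ∃ x : ℕ → X, (∀ j k, j ≠ k → |x j| ⊓ |x k| = 0) ∧ ∀ k, Q (x k) = y k := by
  classical
  -- basic lattice homomorphism facts
  have hQinf : ∀ a b : X, Q (a ⊓ b) = Q a ⊓ Q b := by
    intro a b
    calc Q (a ⊓ b) = Q (-(-a ⊔ -b)) := by rw [← neg_inf, neg_neg]
    _ = -(Q (-a) ⊔ Q (-b)) := by rw [map_neg, hQlat]
    _ = -(-Q a ⊔ -Q b) := by rw [map_neg, map_neg]
    _ = Q a ⊓ Q b := by rw [← neg_inf, neg_neg]
  have hQpos : ∀ a : X, Q (a⁺) = (Q a)⁺ := by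
    intro a
    rw [posPart_def, posPart_def, hQlat, map_zero]
  have hQabs : ∀ a : X, Q |a| = |Q a| := by
    intro a
    have hneg : ∀ b : X, Q (b⁻) = (Q b)⁻ := by
      intro b
      rw [← posPart_neg, ← posPart_neg (Q b), ← map_neg Q, hQpos]
    rw [← posPart_add_negPart a, map_add, hQpos, hneg, posPart_add_negPart]
  -- scaling
  set m : ℕ → ℕ := fun k => max 1 ⌈(2 : ℝ) ^ k * ‖y k‖⌉₊ with hm
  have hm1 : ∀ k, 1 ≤ m k := fun k => le_max_left _ _
  have hm0 : ∀ k, m k ≠ 0 := fun k => Nat.one_le_iff_ne_zero.mp (hm1 k)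
  have hmpos : ∀ k, (0 : ℝ) < (m k : ℝ) := fun k => by
    exact_mod_cast Nat.pos_of_ne_zero (hm0 k)
  have hge : ∀ k, (2 : ℝ) ^ k * ‖y k‖ ≤ (m k : ℝ) := fun k =>
    le_trans (Nat.le_ceil _) (Nat.cast_le.mpr (le_max_right _ _))
  set y' : ℕ → Y := fun k => ((m k : ℝ))⁻¹ • y k with hy'
  have hy'm : ∀ k, (m k) • y' k = y k := by
    intro k
    rw [hy']
    rw [← Nat.cast_smul_eq_nsmul ℝ, smul_smul, mul_inv_cancel₀ (ne_of_gt (hmpos k)), one_smul]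
  have hy'norm : ∀ k, ‖y' k‖ ≤ (1 / 2 : ℝ) ^ k := by
    intro k
    rw [hy']
    have h2k : (0 : ℝ) < 2 ^ k := by positivity
    have : ‖((m k : ℝ))⁻¹ • y k‖ = ((m k : ℝ))⁻¹ * ‖y k‖ := by
      rw [norm_smul, norm_inv, Real.norm_natCast]
    rw [this, div_pow, one_pow]
    rw [inv_mul_le_iff₀ (hmpos k), div_eq_mul_inv, one_mul]
    rw [← div_eq_mul_inv, le_div_iff₀ h2k, mul_comm]
    exact hge k
  -- the disjoint positive sequence z in Y
  set z : ℕ → Y := fun k => |y' k| with hz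
  have hz0 : ∀ k, 0 ≤ z k := fun k => abs_nonneg _
  have hzdisj : ∀ j k, j ≠ k → z j ⊓ z k = 0 := by
    intro j k hjk
    refine le_antisymm ?_ (le_inf (hz0 j) (hz0 k))
    calc z j ⊓ z k ≤ |m j • y' j| ⊓ |m k • y' k| :=
          inf_le_inf (aux_le_abs_nsmul (hm0 j) (y' j)) (aux_le_abs_nsmul (hm0 k) (y' k))
    _ = |y j| ⊓ |y k| := by rw [hy'm, hy'm]
    _ = 0 := hdisj j k hjk
  have hzsum : Summable z := by
    refine Summable.of_norm_bounded summable_geometric_two ?_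
    intro k
    rw [hz]
    simpa [norm_abs_eq_norm] using hy'norm k
  set s : Y := ∑' k, z k with hs
  have hzk_le : ∀ k, z k ≤ s := by
    intro k
    exact hzsum.le_tsum k (fun j _ => hz0 j)
  have hs0 : 0 ≤ s := tsum_nonneg hz0
  -- the tail sums: z k ⊓ (s - z k) = 0 and 0 ≤ s - z k
  have htail : ∀ k, HasSum (fun j => if j = k then 0 else z j) (s - z k) := by
    intro k
    have h1 : HasSum (fun j => if j = k then z k else 0) (z k) := hasSum_ite_eq k (z k)
    have h2 := hzsum.hasSum.sub h1
    have he : (fun j => z j - if j = k then z k else 0) = fun j => if j = k then 0 else z j := by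
      funext j
      by_cases hj : j = k
      · subst hj; simp
      · simp [hj]
    rwa [he] at h2
  have htail0 : ∀ k, 0 ≤ s - z k := by
    intro k
    refine HasSum.nonneg ?_ (htail k)
    intro j
    by_cases hj : j = k <;> simp [hj, hz0 j]
  have hzs : ∀ k, z k ⊓ (s - z k) = 0 := by
    intro k
    have hten := (htail k).tendsto_sum_nat
    -- use the finset-filter formulation instead
    have hten' : Filter.Tendsto (fun F : Finset ℕ => ∑ j ∈ F, (if j = k then 0 else z j))
        Filter.atTop (nhds (s - z k)) := htail k
    have hcont : Filter.Tendsto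
        (fun F : Finset ℕ => z k ⊓ ∑ j ∈ F, (if j = k then 0 else z j))
        Filter.atTop (nhds (z k ⊓ (s - z k))) :=
      Filter.Tendsto.inf_nhds tendsto_const_nhds hten'
    have hzero : (fun F : Finset ℕ => z k ⊓ ∑ j ∈ F, (if j = k then 0 else z j))
        = fun _ => (0 : Y) := by
      funext F
      refine aux_disjoint_sum (hz0 k) _ F ?_ ?_
      · intro i _; by_cases hi : i = k <;> simp [hi, hz0 i]
      · intro i _
        by_cases hi : i = k
        · simp [hi, inf_eq_right.mpr (hz0 k)]
        · simp only [hi, if_false]; exact hzdisj k i (Ne.symm hi)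
    rw [hzero] at hcont
    exact (tendsto_nhds_unique tendsto_const_nhds hcont).symm
  -- positive lift w of s
  obtain ⟨w0, hw0⟩ := hQsurj s
  set w : X := w0⁺ with hwdef
  have hw0' : 0 ≤ w := posPart_nonneg w0
  have hQw : Q w = s := by
    rw [hwdef, hQpos, hw0, posPart_eq_self.mpr hs0]
  -- lifts p of y'
  have hp : ∀ k, Q (Classical.choose (hQsurj (y' k))) = y' k :=
    fun k => Classical.choose_spec (hQsurj (y' k))
  set p : ℕ → X := fun k => Classical.choose (hQsurj (y' k)) with hpdef
  -- capped positive lifts c of z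
  set c : ℕ → X := fun k => |p k| ⊓ w with hcdef
  have hc0 : ∀ k, 0 ≤ c k := fun k => le_inf (abs_nonneg _) hw0'
  have hcw : ∀ k, c k ≤ w := fun k => inf_le_right
  have hQc : ∀ k, Q (c k) = z k := by
    intro k
    rw [hcdef]
    simp only
    rw [hQinf, hQabs, hp k, hQw]
    exact inf_eq_left.mpr (hzk_le k)
  -- partial sums and the sequence b
  set T : ℕ → X := fun n => ∑ j ∈ Finset.range n, c j with hTdef
  have hT0 : ∀ n, 0 ≤ T n := fun n => Finset.sum_nonneg fun j _ => hc0 j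
  set b : ℕ → X := fun k => (c k - T k)⁺ with hbdef
  have hb0 : ∀ k, 0 ≤ b k := fun k => posPart_nonneg _
  have hbc : ∀ k, b k ≤ c k := by
    intro k
    calc b k ≤ (c k)⁺ := posPart_mono (sub_le_self _ (hT0 k))
    _ = c k := posPart_eq_self.mpr (hc0 k)
  have hQT : ∀ n, Q (T n) = ∑ j ∈ Finset.range n, z j := by
    intro n
    rw [hTdef]
    simp only
    rw [map_sum]
    exact Finset.sum_congr rfl fun j _ => hQc j
  have hQb : ∀ k, Q (b k) = z k := by
    intro k
    rw [hbdef]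
    simp only
    rw [hQpos, map_sub, hQc, hQT, aux_posPart_sub]
    have hd : z k ⊓ ∑ j ∈ Finset.range k, z j = 0 := by
      refine aux_disjoint_sum (hz0 k) _ _ (fun j _ => hz0 j) ?_
      intro j hj
      exact hzdisj k j (Ne.symm (Nat.ne_of_lt (Finset.mem_range.mp hj)))
    rw [hd, sub_zero]
  -- partial sums of b are bounded by w
  have hbw : ∀ n, ∑ j ∈ Finset.range n, b j ≤ w := by
    intro n
    induction n with
    | zero => simpa using hw0'
    | succ n ih =>
      rw [Finset.sum_range_succ]
      have hST : ∑ j ∈ Finset.range n, b j ≤ T n :=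
        Finset.sum_le_sum fun j _ => hbc j
      have : ∑ j ∈ Finset.range n, b j + b n
          = (∑ j ∈ Finset.range n, b j + (c n - T n)) ⊔ (∑ j ∈ Finset.range n, b j + 0) := by
        rw [hbdef]
        simp only
        rw [posPart_def, add_sup]
      rw [this]
      refine sup_le ?_ (by simpa using ih)
      calc ∑ j ∈ Finset.range n, b j + (c n - T n) ≤ T n + (c n - T n) :=
            add_le_add_left hST _
      _ = c n := by abel
      _ ≤ w := hcw n
  have hb2 : ∀ j k, j ≠ k → b j + b k ≤ w := by
    intro j k hjk
    have hsub : ({j, k} : Finset ℕ) ⊆ Finset.range (max j k + 1) := by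
      intro i hi
      rcases Finset.mem_insert.mp hi with h | h
      · subst h; exact Finset.mem_range.mpr (Nat.lt_succ_of_le (le_max_left _ _))
      · rw [Finset.mem_singleton] at h; subst h
        exact Finset.mem_range.mpr (Nat.lt_succ_of_le (le_max_right _ _))
    calc b j + b k = ∑ i ∈ ({j, k} : Finset ℕ), b i := (Finset.sum_pair hjk).symm
    _ ≤ ∑ i ∈ Finset.range (max j k + 1), b i :=
        Finset.sum_le_sum_of_subset_of_nonneg hsub fun i _ _ => hb0 i
    _ ≤ w := hbw _
  -- the disjoint positive lifts v
  set v : ℕ → X := fun k => (b k + b k - w)⁺ with hvdef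
  have hv0 : ∀ k, 0 ≤ v k := fun k => posPart_nonneg _
  have hQv : ∀ k, Q (v k) = z k := by
    intro k
    rw [hvdef]
    simp only
    rw [hQpos, map_sub, map_add, hQb, hQw]
    have he : z k + z k - s = z k - (s - z k) := by abel
    rw [he, aux_posPart_sub, hzs k, sub_zero]
  have hvd : ∀ j k, j ≠ k → v j ⊓ v k = 0 := by
    intro j k hjk
    refine aux_posPart_inf_posPart ?_
    have h' : b j + b k - w ≤ 0 := sub_nonpos.mpr (hb2 j k hjk)
    have he : b j + b j - w + (b k + b k - w) = (b j + b k - w) + (b j + b k - w) := by abel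
    rw [he]
    exact add_nonpos h' h'
  -- the final lifts
  set x' : ℕ → X := fun k => (p k ⊔ (-v k)) ⊓ v k with hx'def
  have hQx' : ∀ k, Q (x' k) = y' k := by
    intro k
    rw [hx'def]
    simp only
    rw [hQinf, hQlat, map_neg, hp k, hQv]
    rw [sup_eq_left.mpr (neg_le.mpr (neg_le_abs (y' k)))]
    exact inf_eq_left.mpr (le_abs_self (y' k))
  have habsx' : ∀ k, |x' k| ≤ v k := by
    intro k
    have h1 : x' k ≤ v k := inf_le_right
    have h2 : -(v k) ≤ x' k := by
      refine le_inf (le_sup_right) ?_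
      exact le_trans (neg_nonpos.mpr (hv0 k)) (hv0 k)
    exact abs_le'.mpr ⟨h1, neg_le.mpr h2⟩
  have hx'd : ∀ j k, j ≠ k → |x' j| ⊓ |x' k| = 0 := by
    intro j k hjk
    refine le_antisymm ?_ (le_inf (abs_nonneg _) (abs_nonneg _))
    calc |x' j| ⊓ |x' k| ≤ v j ⊓ v k := inf_le_inf (habsx' j) (habsx' k)
    _ = 0 := hvd j k hjk
  refine ⟨fun k => (m k) • x' k, ?_, ?_⟩
  · intro j k hjk
    refine le_antisymm ?_ (le_inf (abs_nonneg _) (abs_nonneg _))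
    calc |m j • x' j| ⊓ |m k • x' k| ≤ (m j • |x' j|) ⊓ (m k • |x' k|) :=
          inf_le_inf (aux_abs_nsmul_le _ _) (aux_abs_nsmul_le _ _)
    _ = 0 := aux_disjoint_nsmul₂ (abs_nonneg _) (abs_nonneg _) (hx'd j k hjk) _ _
  · intro k
    rw [map_nsmul, hQx', hy'm]
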